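/- Let U₁, U₂ ∈ C²(ℝ^d), let μ₂ = e^{-U₂}·Leb be a probability measure on ℝ^d, and let μ₁ = e^{-U₁}·Leb (a positive Borel measure, not necessarily finite). Define the reciprocal characteristics 𝒰ᵢ := (1/8)‖∇Uᵢ‖² − (1/4)ΔUᵢ for i = 1,2. If ∫‖∇U₁ − ∇U₂‖² dμ₂ < ∞ and 𝒰₂ − 𝒰₁ ∈ L¹(μ₂), then ∫ (𝒰₂ − 𝒰₁) dμ₂ = −(1/8) ∫ ‖∇U₁ − ∇U₂‖² dμ₂. In particular, taking U₁ = 0: if ∫‖∇U₂‖² dμ₂ < ∞ and 𝒰₂ ∈ L¹(μ₂) then ∫ 𝒰₂ dμ₂ = −(1/8)∫‖∇U₂‖² dμ₂. -/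

import Mathlib

open MeasureTheory
open scoped RealInnerProductSpace

/-- `ℝ^d` with the Euclidean inner product and Lebesgue measure. -/
abbrev Euc (d : ℕ) := EuclideanSpace ℝ (Fin d)

/-- The Euclidean Laplacian of `f : ℝ^d → ℝ`, as the trace of the Hessian. -/
noncomputable def lap {d : ℕ} (f : Euc d → ℝ) (x : Euc d) : ℝ :=
  ∑ i, ⟪fderiv ℝ (gradient f) x (EuclideanSpace.single i (1:ℝ)),
        EuclideanSpace.single i (1:ℝ)⟫

/-- The reciprocal characteristic `𝒰 = (1/8)‖∇U‖² − (1/4)ΔU`. -/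
noncomputable def recipChar {d : ℕ} (U : Euc d → ℝ) (x : Euc d) : ℝ :=
  (1 / 8) * ‖gradient U x‖ ^ 2 - (1 / 4) * lap U x

namespace Stmt13Aux

open Filter Topology Real

variable {d : ℕ}

lemma euc_repr (a : Euc d) : a = ∑ i, a i • EuclideanSpace.single i (1:ℝ) := by
  ext j
  have : (∑ i, a i • (EuclideanSpace.single i (1:ℝ) : Euc d)) j
      = ∑ i, (a i • (EuclideanSpace.single i (1:ℝ) : Euc d)) j :=
    by rw [WithLp.ofLp_sum, Finset.sum_apply]
  rw [this]
  simp [EuclideanSpace.single_apply]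

lemma clm_sum_apply (L : Euc d →L[ℝ] ℝ) (a : Euc d) :
    ∑ i, L (EuclideanSpace.single i (1:ℝ)) * a i = L a := by
  conv_rhs => rw [euc_repr a, map_sum]
  simp [mul_comm]

lemma fderiv_apply_eq_inner (U : Euc d → ℝ) (x v : Euc d) :
    fderiv ℝ U x v = ⟪gradient U x, v⟫ := by
  rw [gradient, InnerProductSpace.toDual_symm_apply]

lemma gradient_contDiff {U : Euc d → ℝ} (hU : ContDiff ℝ 2 U) :
    ContDiff ℝ 1 (gradient U) := by
  have : gradient U = fun x => (InnerProductSpace.toDual ℝ (Euc d)).symm (fderiv ℝ U x) := rfl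
  rw [this]
  exact ((InnerProductSpace.toDual ℝ (Euc d)).symm.contDiff).comp (hU.fderiv_right (by norm_num))

lemma second_deriv {U : Euc d → ℝ} (hU : ContDiff ℝ 2 U) (x v u : Euc d) :
    fderiv ℝ (fun y => fderiv ℝ U y u) x v
      = ⟪fderiv ℝ (gradient U) x v, u⟫ := by
  have hg : DifferentiableAt ℝ (gradient U) x :=
    ((gradient_contDiff hU).differentiable one_ne_zero) x
  have h1 : (fun y => fderiv ℝ U y u) = fun y => (innerSL ℝ u) (gradient U y) := by
    funext y
    simp only [innerSL_apply_apply]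
    rw [fderiv_apply_eq_inner, real_inner_comm]
  rw [h1]
  have h2 : fderiv ℝ (fun y => (innerSL ℝ u) (gradient U y)) x
      = (innerSL ℝ u).comp (fderiv ℝ (gradient U) x) :=
    ((innerSL ℝ u).hasFDerivAt.comp x hg.hasFDerivAt).fderiv
  rw [h2]
  simp only [ContinuousLinearMap.comp_apply, innerSL_apply_apply]
  exact real_inner_comm _ _

lemma lap_continuous {U : Euc d → ℝ} (hU : ContDiff ℝ 2 U) : Continuous (lap U) := by
  apply continuous_finset_sum
  intro i _
  exact Continuous.inner
    (((gradient_contDiff hU).continuous_fderiv one_ne_zero).clm_apply continuous_const)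
    continuous_const

/-- Pointwise algebraic identity. -/
lemma pointwise_alg (U₁ U₂ : Euc d → ℝ) (x : Euc d) :
    recipChar U₂ x - recipChar U₁ x
      = -(1/4) * ((lap U₂ x - lap U₁ x)
          - ⟪gradient U₂ x - gradient U₁ x, gradient U₂ x⟫)
        - (1/8) * ‖gradient U₁ x - gradient U₂ x‖^2 := by
  simp only [recipChar]
  have h1 : ‖gradient U₁ x - gradient U₂ x‖^2
      = ‖gradient U₁ x‖^2 - 2*⟪gradient U₁ x, gradient U₂ x⟫ + ‖gradient U₂ x‖^2 := by
    rw [norm_sub_sq_real]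
  have h2 : ⟪gradient U₂ x - gradient U₁ x, gradient U₂ x⟫
      = ‖gradient U₂ x‖^2 - ⟪gradient U₁ x, gradient U₂ x⟫ := by
    rw [inner_sub_left]
    rw [real_inner_self_eq_norm_sq]
  rw [h1, h2]
  ring

lemma int_of_cs {φ q : Euc d → ℝ} (hφ : Continuous φ) (hφc : HasCompactSupport φ)
    (hq : Continuous q) : Integrable (fun x => φ x * q x) (volume : Measure (Euc d)) :=
  (hφ.mul hq).integrable_of_hasCompactSupport (hφc.mul_right)

/-- The key integration-by-parts identity against a compactly supported `C¹` cutoff. -/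
lemma key_ibp {U₁ U₂ : Euc d → ℝ} (hU₁ : ContDiff ℝ 2 U₁) (hU₂ : ContDiff ℝ 2 U₂)
    {φ : Euc d → ℝ} (hφ : ContDiff ℝ 2 φ) (hφc : HasCompactSupport φ) :
    ∫ x, Real.exp (-U₂ x) * (φ x * ((lap U₂ x - lap U₁ x)
        - ⟪gradient U₂ x - gradient U₁ x, gradient U₂ x⟫))
      = -∫ x, Real.exp (-U₂ x)
          * (fderiv ℝ φ x (gradient U₂ x - gradient U₁ x)) := by
  set w : Euc d → ℝ := fun x => Real.exp (-U₂ x) with hw_def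
  set ψ : Euc d → ℝ := fun x => φ x * w x with hψ_def
  set a : Euc d → Euc d := fun x => gradient U₂ x - gradient U₁ x with ha_def
  set p : Fin d → Euc d → ℝ :=
    fun i x => fderiv ℝ U₂ x (EuclideanSpace.single i (1:ℝ))
      - fderiv ℝ U₁ x (EuclideanSpace.single i (1:ℝ)) with hp_def
  -- basic smoothness facts
  have hwC : ContDiff ℝ 2 w := Real.contDiff_exp.comp hU₂.neg
  have hψC : ContDiff ℝ 1 ψ := (hφ.of_le one_le_two).mul (hwC.of_le one_le_two)
  have hψc : HasCompactSupport ψ := hφc.mul_right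
  have hpC : ∀ i, ContDiff ℝ 1 (p i) := by
    intro i
    exact ((hU₂.fderiv_right le_rfl).clm_apply contDiff_const).sub
      ((hU₁.fderiv_right le_rfl).clm_apply contDiff_const)
  have haC : Continuous a :=
    ((gradient_contDiff hU₂).continuous).sub ((gradient_contDiff hU₁).continuous)
  have hg₂C : Continuous (gradient U₂) := (gradient_contDiff hU₂).continuous
  -- derivative of the weight
  have hwd : ∀ x, HasFDerivAt w (w x • (-(fderiv ℝ U₂ x))) x := by
    intro x
    have h1 : HasFDerivAt (fun y => -U₂ y) (-(fderiv ℝ U₂ x)) x :=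
      ((hU₂.differentiable two_ne_zero x).hasFDerivAt).neg
    exact (Real.hasDerivAt_exp (-U₂ x)).comp_hasFDerivAt x h1
  -- p i x = a x i
  have hpa : ∀ i x, p i x = a x i := by
    intro i x
    simp only [hp_def, ha_def]
    rw [fderiv_apply_eq_inner, fderiv_apply_eq_inner,
      EuclideanSpace.inner_single_right, EuclideanSpace.inner_single_right]
    simp [PiLp.sub_apply]
  -- the per-coordinate integration by parts
  have Hi : ∀ i : Fin d,
      ∫ x, ψ x * fderiv ℝ (p i) x (EuclideanSpace.single i (1:ℝ))
        = -∫ x, fderiv ℝ ψ x (EuclideanSpace.single i (1:ℝ)) * p i x := by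
    intro i
    have hcont_dψ : Continuous fun x => fderiv ℝ ψ x (EuclideanSpace.single i (1:ℝ)) :=
      (hψC.continuous_fderiv one_ne_zero).clm_apply continuous_const
    have hcs_dψ : HasCompactSupport
        fun x => fderiv ℝ ψ x (EuclideanSpace.single i (1:ℝ)) :=
      (hψc.fderiv ℝ).comp_left (g := fun L : Euc d →L[ℝ] ℝ =>
        L (EuclideanSpace.single i (1:ℝ))) rfl
    have h1 : Integrable (fun x =>
        fderiv ℝ ψ x (EuclideanSpace.single i (1:ℝ)) * p i x) volume :=
      int_of_cs hcont_dψ hcs_dψ (hpC i).continuous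
    have h2 : Integrable (fun x =>
        ψ x * fderiv ℝ (p i) x (EuclideanSpace.single i (1:ℝ))) volume :=
      int_of_cs hψC.continuous hψc
        (((hpC i).continuous_fderiv one_ne_zero).clm_apply continuous_const)
    have h3 : Integrable (fun x => ψ x * p i x) volume :=
      int_of_cs hψC.continuous hψc (hpC i).continuous
    exact integral_mul_fderiv_eq_neg_fderiv_mul_of_integrable h1 h2 h3
      (fun x _ => hψC.differentiable one_ne_zero x) (fun x _ => (hpC i).differentiable one_ne_zero x)
  -- pointwise identities for the sums
  have sumL : ∀ x, ∑ i, ψ x * fderiv ℝ (p i) x (EuclideanSpace.single i (1:ℝ))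
      = ψ x * (lap U₂ x - lap U₁ x) := by
    intro x
    rw [← Finset.mul_sum]
    congr 1
    have : ∀ i : Fin d, fderiv ℝ (p i) x (EuclideanSpace.single i (1:ℝ))
        = ⟪fderiv ℝ (gradient U₂) x (EuclideanSpace.single i (1:ℝ)),
            EuclideanSpace.single i (1:ℝ)⟫
          - ⟪fderiv ℝ (gradient U₁) x (EuclideanSpace.single i (1:ℝ)),
            EuclideanSpace.single i (1:ℝ)⟫ := by
      intro i
      have d2 : DifferentiableAt ℝ
          (fun y => fderiv ℝ U₂ y (EuclideanSpace.single i (1:ℝ))) x :=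
        (((hU₂.fderiv_right (m := 1) le_rfl).clm_apply contDiff_const).differentiable one_ne_zero) x
      have d1 : DifferentiableAt ℝ
          (fun y => fderiv ℝ U₁ y (EuclideanSpace.single i (1:ℝ))) x :=
        (((hU₁.fderiv_right (m := 1) le_rfl).clm_apply contDiff_const).differentiable one_ne_zero) x
      have : fderiv ℝ (p i) x
          = fderiv ℝ (fun y => fderiv ℝ U₂ y (EuclideanSpace.single i (1:ℝ))) x
            - fderiv ℝ (fun y => fderiv ℝ U₁ y (EuclideanSpace.single i (1:ℝ))) x :=
        fderiv_sub d2 d1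
      rw [hp_def]
      simp only []
      rw [this]
      rw [ContinuousLinearMap.sub_apply, second_deriv hU₂, second_deriv hU₁]
    simp only [this, lap, Finset.sum_sub_distrib]
  have sumR : ∀ x, ∑ i, fderiv ℝ ψ x (EuclideanSpace.single i (1:ℝ)) * p i x
      = w x * fderiv ℝ φ x (a x) - φ x * (w x * ⟪gradient U₂ x, a x⟫) := by
    intro x
    have : ∑ i, fderiv ℝ ψ x (EuclideanSpace.single i (1:ℝ)) * p i x
        = fderiv ℝ ψ x (a x) := by
      rw [← clm_sum_apply (fderiv ℝ ψ x) (a x)]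
      exact Finset.sum_congr rfl fun i _ => by rw [hpa]
    rw [this]
    have hdφ : DifferentiableAt ℝ φ x := (hφ.differentiable two_ne_zero) x
    have hdw : DifferentiableAt ℝ w x := (hwd x).differentiableAt
    have hm : fderiv ℝ ψ x = φ x • fderiv ℝ w x + w x • fderiv ℝ φ x := by
      rw [hψ_def]
      exact fderiv_mul hdφ hdw
    rw [hm]
    have hwf : fderiv ℝ w x = w x • (-(fderiv ℝ U₂ x)) := (hwd x).fderiv
    rw [hwf]
    simp only [ContinuousLinearMap.add_apply, ContinuousLinearMap.smul_apply,
      ContinuousLinearMap.neg_apply, smul_eq_mul]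
    rw [fderiv_apply_eq_inner]
    ring
  -- integrate the sums
  have hsum : ∫ x, ψ x * (lap U₂ x - lap U₁ x)
      = -∫ x, (w x * fderiv ℝ φ x (a x) - φ x * (w x * ⟪gradient U₂ x, a x⟫)) := by
    have e1 : ∫ x, ψ x * (lap U₂ x - lap U₁ x)
        = ∑ i, ∫ x, ψ x * fderiv ℝ (p i) x (EuclideanSpace.single i (1:ℝ)) := by
      rw [← integral_finset_sum]
      · exact integral_congr_ae (Filter.Eventually.of_forall fun x => (sumL x).symm)
      · intro i _
        exact int_of_cs hψC.continuous hψc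
          (((hpC i).continuous_fderiv one_ne_zero).clm_apply continuous_const)
    have e2 : ∫ x, (w x * fderiv ℝ φ x (a x) - φ x * (w x * ⟪gradient U₂ x, a x⟫))
        = ∑ i, ∫ x, fderiv ℝ ψ x (EuclideanSpace.single i (1:ℝ)) * p i x := by
      rw [← integral_finset_sum]
      · exact integral_congr_ae (Filter.Eventually.of_forall fun x => (sumR x).symm)
      · intro i _
        exact int_of_cs ((hψC.continuous_fderiv one_ne_zero).clm_apply continuous_const)
          ((hψc.fderiv ℝ).comp_left (g := fun L : Euc d →L[ℝ] ℝ =>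
            L (EuclideanSpace.single i (1:ℝ))) rfl)
          (hpC i).continuous
    rw [e1, e2, ← Finset.sum_neg_distrib]
    exact Finset.sum_congr rfl fun i _ => Hi i
  -- integrability of the different pieces
  have intX : Integrable (fun x => w x * fderiv ℝ φ x (a x)) volume := by
    have hc : Continuous fun x => fderiv ℝ φ x (a x) :=
      ((hφ.continuous_fderiv two_ne_zero).clm_apply haC)
    have hcs : HasCompactSupport fun x => fderiv ℝ φ x (a x) := by
      apply (hφc.fderiv ℝ).mono
      intro x hx
      simp only [Function.mem_support] at hx ⊢
      intro h
      exact hx (by rw [h]; simp)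
    exact ((hc.mul hwC.continuous).integrable_of_hasCompactSupport
      (hcs.mul_right)).congr (Filter.Eventually.of_forall fun x => mul_comm _ _)
  have intY : Integrable (fun x => φ x * (w x * ⟪gradient U₂ x, a x⟫)) volume :=
    int_of_cs hφ.continuous hφc (hwC.continuous.mul (hg₂C.inner haC))
  -- put everything together
  have goal_lhs : ∫ x, w x * (φ x * ((lap U₂ x - lap U₁ x) - ⟪a x, gradient U₂ x⟫))
      = (∫ x, ψ x * (lap U₂ x - lap U₁ x))
        - ∫ x, φ x * (w x * ⟪gradient U₂ x, a x⟫) := by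
    rw [← integral_sub
      (int_of_cs (q := fun x => lap U₂ x - lap U₁ x) hψC.continuous hψc ((lap_continuous hU₂).sub (lap_continuous hU₁))) intY]
    apply integral_congr_ae
    apply Filter.Eventually.of_forall
    intro x
    simp only [hψ_def]
    rw [real_inner_comm (a x) (gradient U₂ x)]
    ring
  rw [goal_lhs, hsum, integral_sub intX intY]
  ring

noncomputable def bump (d : ℕ) : ContDiffBump (0 : Euc d) := ⟨1, 2, one_pos, one_lt_two⟩

noncomputable def cutoff (d : ℕ) (n : ℕ) (x : Euc d) : ℝ := bump d (((n:ℝ)+1)⁻¹ • x)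

lemma cutoff_contDiff (n : ℕ) : ContDiff ℝ 2 (cutoff d n) :=
  ((bump d).contDiff (n := 2)).comp (contDiff_const_smul _)

lemma cutoff_nonneg (n : ℕ) (x : Euc d) : 0 ≤ cutoff d n x := (bump d).nonneg

lemma cutoff_le_one (n : ℕ) (x : Euc d) : cutoff d n x ≤ 1 := (bump d).le_one

lemma bump_rIn : (bump d).rIn = 1 := rfl
lemma bump_rOut : (bump d).rOut = 2 := rfl

lemma cutoff_eq_one {n : ℕ} {x : Euc d} (h : ‖x‖ ≤ (n:ℝ)+1) : cutoff d n x = 1 := by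
  apply (bump d).one_of_mem_closedBall
  rw [Metric.mem_closedBall, dist_zero_right, norm_smul,
    Real.norm_of_nonneg (by positivity), bump_rIn]
  rw [inv_mul_le_iff₀ (by positivity)]
  simpa using h

lemma cutoff_cs (n : ℕ) : HasCompactSupport (cutoff d n) := by
  apply HasCompactSupport.intro (isCompact_closedBall (0 : Euc d) (2*((n:ℝ)+1)))
  intro x hx
  apply (bump d).zero_of_le_dist
  rw [dist_zero_right, norm_smul, Real.norm_of_nonneg (by positivity), bump_rOut,
    inv_mul_eq_div, le_div_iff₀ (by positivity)]
  have hx' : 2*((n:ℝ)+1) < ‖x‖ := by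
    simpa [Metric.mem_closedBall, dist_zero_right, not_le] using hx
  linarith

lemma cutoff_fderiv_bound : ∃ C : ℝ, 0 ≤ C ∧ ∀ (n : ℕ) (x : Euc d),
    ‖fderiv ℝ (cutoff d n) x‖ ≤ C * ((n:ℝ)+1)⁻¹ := by
  obtain ⟨C, hC⟩ := (((bump d).contDiff (n := 1)).continuous_fderiv
    (by simp)).bounded_above_of_compact_support (((bump d).hasCompactSupport).fderiv ℝ)
  refine ⟨max C 0, le_max_right _ _, fun n x => ?_⟩
  set c : ℝ := ((n:ℝ)+1)⁻¹ with hc_def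
  have hc0 : (0:ℝ) ≤ c := by positivity
  set L : Euc d →L[ℝ] Euc d := c • ContinuousLinearMap.id ℝ (Euc d) with hL_def
  have hfd : HasFDerivAt (cutoff d n) ((fderiv ℝ (bump d) (L x)).comp L) x := by
    have h1 : HasFDerivAt (bump d) (fderiv ℝ (bump d) (L x)) (L x) :=
      (((bump d).contDiff (n := 1)).differentiable (by simp) (L x)).hasFDerivAt
    exact h1.comp x L.hasFDerivAt
  rw [hfd.fderiv]
  have hLnorm : ‖L‖ ≤ c := by
    rw [hL_def]
    calc ‖c • ContinuousLinearMap.id ℝ (Euc d)‖ ≤ ‖c‖ * ‖ContinuousLinearMap.id ℝ (Euc d)‖ := ContinuousLinearMap.opNorm_smul_le _ _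
    _ ≤ c * 1 := by
        rw [Real.norm_of_nonneg hc0]
        exact mul_le_mul_of_nonneg_left ContinuousLinearMap.norm_id_le hc0
    _ = c := mul_one c
  calc ‖(fderiv ℝ (bump d) (L x)).comp L‖
      ≤ ‖fderiv ℝ (bump d) (L x)‖ * ‖L‖ := ContinuousLinearMap.opNorm_comp_le _ _
  _ ≤ max C 0 * c :=
      mul_le_mul ((hC _).trans (le_max_left _ _)) hLnorm (norm_nonneg _) (le_max_right _ _)

lemma integral_wd (V : Euc d → ℝ) (hV : Continuous V) (f : Euc d → ℝ) :
    ∫ x, f x ∂(volume.withDensity fun x => ENNReal.ofReal (Real.exp (-V x)))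
      = ∫ x, Real.exp (-V x) * f x := by
  have hm : Measurable (fun x => Real.toNNReal (Real.exp (-V x))) :=
    (Real.continuous_exp.comp hV.neg).measurable.real_toNNReal
  rw [show (fun x => ENNReal.ofReal (Real.exp (-V x)))
      = (fun x => ((Real.toNNReal (Real.exp (-V x)) : NNReal) : ENNReal)) from rfl,
    integral_withDensity_eq_integral_smul hm f]
  congr 1; funext x
  rw [NNReal.smul_def, Real.coe_toNNReal _ (Real.exp_pos _).le, smul_eq_mul]

end Stmt13Aux

open Stmt13Aux Filter Topology in
theorem stmt13 (d : ℕ) (U₁ U₂ : Euc d → ℝ)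
    (hU₁ : ContDiff ℝ 2 U₁) (hU₂ : ContDiff ℝ 2 U₂)
    (μ₂ : Measure (Euc d))
    (hμ₂ : μ₂ = volume.withDensity fun x => ENNReal.ofReal (Real.exp (-U₂ x)))
    [IsProbabilityMeasure μ₂]
    (hFI : Integrable (fun x => ‖gradient U₁ x - gradient U₂ x‖ ^ 2) μ₂)
    (hL1 : Integrable (fun x => recipChar U₂ x - recipChar U₁ x) μ₂) :
    ∫ x, (recipChar U₂ x - recipChar U₁ x) ∂μ₂
      = -(1 / 8) * ∫ x, ‖gradient U₁ x - gradient U₂ x‖ ^ 2 ∂μ₂ := by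
  classical
  have hg₁C : Continuous (gradient U₁) := (gradient_contDiff hU₁).continuous
  have hg₂C : Continuous (gradient U₂) := (gradient_contDiff hU₂).continuous
  set a : Euc d → Euc d := fun x => gradient U₂ x - gradient U₁ x with ha_def
  have haC : Continuous a := hg₂C.sub hg₁C
  set F : Euc d → ℝ := fun x => (lap U₂ x - lap U₁ x) - ⟪a x, gradient U₂ x⟫ with hF_def
  have hFcont : Continuous F :=
    ((lap_continuous hU₂).sub (lap_continuous hU₁)).sub (haC.inner hg₂C)
  have hFeq : ∀ x, F x = (-4) * (recipChar U₂ x - recipChar U₁ x)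
      - (1/2) * ‖gradient U₁ x - gradient U₂ x‖^2 := by
    intro x
    have h := pointwise_alg U₁ U₂ x
    simp only [hF_def, ha_def]
    linarith
  have hFint : Integrable F μ₂ := by
    have he : F = fun x => (-4) * (recipChar U₂ x - recipChar U₁ x)
        - (1/2) * ‖gradient U₁ x - gradient U₂ x‖^2 := funext hFeq
    rw [he]
    exact ((hL1.const_mul _).sub (hFI.const_mul _))
  have hanorm : Integrable (fun x => ‖a x‖) μ₂ := by
    have hb : Integrable (fun x => 1 + ‖gradient U₁ x - gradient U₂ x‖^2) μ₂ :=
      (integrable_const 1).add hFI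
    apply hb.mono' (haC.norm.aestronglyMeasurable)
    apply ae_of_all
    intro x
    rw [Real.norm_of_nonneg (norm_nonneg _)]
    have hax : ‖a x‖ = ‖gradient U₁ x - gradient U₂ x‖ := by
      rw [ha_def]; exact norm_sub_rev _ _
    rw [hax]
    nlinarith [sq_nonneg (‖gradient U₁ x - gradient U₂ x‖ - 1)]
  -- per-n integration by parts identity
  have hid : ∀ n : ℕ, ∫ x, cutoff d n x * F x ∂μ₂
      = -∫ x, fderiv ℝ (cutoff d n) x (a x) ∂μ₂ := by
    intro n
    rw [hμ₂, integral_wd U₂ hU₂.continuous, integral_wd U₂ hU₂.continuous]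
    exact key_ibp hU₁ hU₂ (cutoff_contDiff n) (cutoff_cs n)
  -- limit of the left-hand sides
  have hT1 : Tendsto (fun n => ∫ x, cutoff d n x * F x ∂μ₂) atTop (𝓝 (∫ x, F x ∂μ₂)) := by
    apply tendsto_integral_of_dominated_convergence (fun x => ‖F x‖)
    · intro n; exact ((cutoff_contDiff n).continuous.mul hFcont).aestronglyMeasurable
    · exact hFint.norm
    · intro n
      apply ae_of_all; intro x
      rw [norm_mul]
      calc ‖cutoff d n x‖ * ‖F x‖ ≤ 1 * ‖F x‖ := by
            apply mul_le_mul_of_nonneg_right _ (norm_nonneg _)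
            rw [Real.norm_of_nonneg (cutoff_nonneg n x)]
            exact cutoff_le_one n x
      _ = ‖F x‖ := one_mul _
    · apply ae_of_all; intro x
      apply Tendsto.congr' _ tendsto_const_nhds
      filter_upwards [eventually_ge_atTop (⌈‖x‖⌉₊)] with n hn
      rw [cutoff_eq_one, one_mul]
      calc ‖x‖ ≤ (⌈‖x‖⌉₊ : ℝ) := Nat.le_ceil _
      _ ≤ (n:ℝ) := by exact_mod_cast hn
      _ ≤ (n:ℝ)+1 := by linarith
  -- limit of the right-hand sides
  obtain ⟨C, hC0, hC⟩ := cutoff_fderiv_bound (d := d)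
  have hT2 : Tendsto (fun n => ∫ x, fderiv ℝ (cutoff d n) x (a x) ∂μ₂) atTop (𝓝 0) := by
    have hb : ∀ n : ℕ, ‖∫ x, fderiv ℝ (cutoff d n) x (a x) ∂μ₂‖
        ≤ C * ((n:ℝ)+1)⁻¹ * ∫ x, ‖a x‖ ∂μ₂ := by
      intro n
      calc ‖∫ x, fderiv ℝ (cutoff d n) x (a x) ∂μ₂‖
          ≤ ∫ x, C * ((n:ℝ)+1)⁻¹ * ‖a x‖ ∂μ₂ := by
            apply norm_integral_le_of_norm_le (hanorm.const_mul _)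
            apply ae_of_all; intro x
            calc ‖fderiv ℝ (cutoff d n) x (a x)‖
                ≤ ‖fderiv ℝ (cutoff d n) x‖ * ‖a x‖ :=
                  (fderiv ℝ (cutoff d n) x).le_opNorm (a x)
            _ ≤ C * ((n:ℝ)+1)⁻¹ * ‖a x‖ :=
                  mul_le_mul_of_nonneg_right (hC n x) (norm_nonneg _)
      _ = C * ((n:ℝ)+1)⁻¹ * ∫ x, ‖a x‖ ∂μ₂ := integral_const_mul _ _
    apply squeeze_zero_norm hb
    have h1 : Tendsto (fun n : ℕ => ((n:ℝ)+1)⁻¹) atTop (𝓝 0) :=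
        tendsto_inv_atTop_zero.comp
          (tendsto_atTop_add_const_right atTop 1 tendsto_natCast_atTop_atTop)
    have h2 : Tendsto (fun n : ℕ => C * ((n:ℝ)+1)⁻¹ * ∫ x, ‖a x‖ ∂μ₂) atTop
        (𝓝 (C * 0 * ∫ x, ‖a x‖ ∂μ₂)) := (h1.const_mul C).mul_const _
    simpa using h2
  have hF0 : ∫ x, F x ∂μ₂ = 0 := by
    have h2 : Tendsto (fun n => ∫ x, cutoff d n x * F x ∂μ₂) atTop (𝓝 0) := by
      have := hT2.neg
      simp only [neg_zero] at this
      exact this.congr fun n => (hid n).symm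
    exact tendsto_nhds_unique hT1 h2
  have congr1 : ∫ x, (recipChar U₂ x - recipChar U₁ x) ∂μ₂
      = ∫ x, (-(1/4) * F x - (1/8) * ‖gradient U₁ x - gradient U₂ x‖^2) ∂μ₂ := by
    apply integral_congr_ae
    apply ae_of_all
    intro x
    have h := pointwise_alg U₁ U₂ x
    simp only [hF_def, ha_def]
    linarith
  rw [congr1, integral_sub (hFint.const_mul _) (hFI.const_mul _),
    integral_const_mul, integral_const_mul, hF0]
  ring
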